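/- arXiv:2602.11139 — 2 statements merged into one kernel-verified Lean document; each statement's English description precedes it below -/
import Mathlib

section
/- Let k ≥ 0 and m ≥ 1 be integers, and for i ∈ {0, …, m−1} define the set I_{i,k,m} := { (i + 2^l − 1) mod m : 0 ≤ l ≤ k−1 } ⊆ {0, …, m−1}. If m ≥ 2^k, then for all indices 0 ≤ i < j ≤ m−1 the intersection I_{i,k,m} ∩ I_{j,k,m} contains at most one element. -/
/-- Uniqueness of sums of two powers of two. -/
theorem two_pow_add_two_pow_inj {a d b c : ℕ} (h : 2^a + 2^d = 2^b + 2^c) :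
    (a = b ∧ d = c) ∨ (a = c ∧ d = b) := by
  have inj : Function.Injective (fun n : ℕ => 2 ^ n) :=
    Nat.pow_right_injective (le_refl 2)
  have key : ∀ x y u v : ℕ, x ≤ y → u ≤ v → 2^x + 2^y = 2^u + 2^v →
      y = v ∧ x = u := by
    intro x y u v hxy huv heq
    have h1 : 2^y < 2^(v+1) := by
      have ha : (2:ℕ)^u ≤ 2^v := Nat.pow_le_pow_right (by norm_num) huv
      have hx1 : 0 < 2^x := Nat.pow_pos (by norm_num)
      have hv1 : (2:ℕ)^(v+1) = 2^v + 2^v := by ring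
      omega
    have h2 : 2^v < 2^(y+1) := by
      have ha : (2:ℕ)^x ≤ 2^y := Nat.pow_le_pow_right (by norm_num) hxy
      have hu1 : 0 < 2^u := Nat.pow_pos (by norm_num)
      have hy1 : (2:ℕ)^(y+1) = 2^y + 2^y := by ring
      omega
    have hyv : y = v := by
      have q1 := (Nat.pow_lt_pow_iff_right (by norm_num : 1 < 2)).mp h1
      have q2 := (Nat.pow_lt_pow_iff_right (by norm_num : 1 < 2)).mp h2
      omega
    subst hyv
    have : (2:ℕ)^x = 2^u := by omega
    exact ⟨rfl, inj this⟩
  rcases le_total a d with h1 | h1 <;> rcases le_total b c with h2 | h2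
  · have := key a d b c h1 h2 h; tauto
  · have := key a d c b h1 h2 (by omega); tauto
  · have := key d a b c h1 h2 (by omega); tauto
  · have := key d a c b h1 h2 (by omega); tauto

/-- From equality of the shifted group entries, derive the congruence of the
unshifted sums. -/
theorem feature_group_cong {i j m a b : ℕ}
    (h : (i + 2^a - 1) % m = (j + 2^b - 1) % m) :
    (i + 2^a) % m = (j + 2^b) % m := by
  have pa : 0 < 2^a := Nat.pow_pos (by norm_num)
  have pb : 0 < 2^b := Nat.pow_pos (by norm_num)
  have e1 : i + 2^a - 1 + 1 = i + 2^a := by omega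
  have e2 : j + 2^b - 1 + 1 = j + 2^b := by omega
  have hmod : (i + 2^a - 1) ≡ (j + 2^b - 1) [MOD m] := h
  have := hmod.add_right 1
  rwa [e1, e2] at this


/-- Two congruent numbers in `[1, m]` are equal. -/
theorem eq_of_mod_eq_of_le {x y m : ℕ} (h : x % m = y % m)
    (hx1 : 1 ≤ x) (hxm : x ≤ m) (hy1 : 1 ≤ y) (hym : y ≤ m) : x = y := by
  by_cases hx' : x = m
  · by_cases hy' : y = m
    · omega
    · exfalso
      have hyy : y % m = y := Nat.mod_eq_of_lt (by omega)
      rw [hx', Nat.mod_self] at h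
      omega
  · have hxx : x % m = x := Nat.mod_eq_of_lt (by omega)
    by_cases hy' : y = m
    · exfalso
      rw [hy', Nat.mod_self] at h
      omega
    · have hyy : y % m = y := Nat.mod_eq_of_lt (by omega)
      omega

/-- **Intersections of feature groups.** For `k ≥ 0`, `m ≥ 1`, and
`i ∈ {0, …, m−1}`, define `I_{i,k,m} := {(i + 2^l − 1) % m : 0 ≤ l ≤ k−1}`.
If `m ≥ 2^k`, then for all `0 ≤ i < j ≤ m−1`, `|I_{i,k,m} ∩ I_{j,k,m}| ≤ 1`. -/
theorem feature_group_intersection (k m : ℕ) (hm : 1 ≤ m) (hmk : 2 ^ k ≤ m) :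
    ∀ i j : ℕ, i < j → j ≤ m - 1 →
      (((Finset.range k).image (fun l => (i + 2 ^ l - 1) % m)) ∩
        ((Finset.range k).image (fun l => (j + 2 ^ l - 1) % m))).card ≤ 1 := by
  intro i j hij hjm
  rw [Finset.card_le_one]
  intro x hx y hy
  simp only [Finset.mem_inter, Finset.mem_image, Finset.mem_range] at hx hy
  obtain ⟨⟨a, ha, hxa⟩, ⟨b, hb, hxb⟩⟩ := hx
  obtain ⟨⟨c, hc, hyc⟩, ⟨d, hd, hyd⟩⟩ := hy
  have h1 : (i + 2^a) % m = (j + 2^b) % m := feature_group_cong (hxa.trans hxb.symm)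
  have h2 : (i + 2^c) % m = (j + 2^d) % m := feature_group_cong (hyc.trans hyd.symm)
  -- combine the two congruences
  have m1 : (i + 2^a) ≡ (j + 2^b) [MOD m] := h1
  have m2 : (j + 2^d) ≡ (i + 2^c) [MOD m] := Nat.ModEq.symm h2
  have m3 := m1.add m2
  have m4 : (i + j) + (2^a + 2^d) ≡ (i + j) + (2^b + 2^c) [MOD m] := by
    have e1 : (i + 2^a) + (j + 2^d) = (i + j) + (2^a + 2^d) := by ring
    have e2 : (j + 2^b) + (i + 2^c) = (i + j) + (2^b + 2^c) := by ring
    rwa [e1, e2] at m3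
  have m5 : (2^a + 2^d) ≡ (2^b + 2^c) [MOD m] :=
    Nat.ModEq.add_left_cancel' (i + j) m4
  -- both sides lie in [2, m], hence are equal
  have hk1 : 1 ≤ k := by omega
  have bound : ∀ l : ℕ, l < k → 2^l ≤ 2^(k-1) := by
    intro l hl
    exact Nat.pow_le_pow_right (by norm_num) (by omega)
  have hkk : 2^(k-1) + 2^(k-1) = 2^k := by
    have : k - 1 + 1 = k := by omega
    calc 2^(k-1) + 2^(k-1) = 2^(k-1) * 2 := by ring
    _ = 2^(k-1+1) := by rw [pow_succ]
    _ = 2^k := by rw [this]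
  have ba := bound a ha
  have bb := bound b hb
  have bc := bound c hc
  have bd := bound d hd
  have pa : 0 < 2^a := Nat.pow_pos (by norm_num)
  have pb : 0 < 2^b := Nat.pow_pos (by norm_num)
  have pc : 0 < 2^c := Nat.pow_pos (by norm_num)
  have pd : 0 < 2^d := Nat.pow_pos (by norm_num)
  have hsum : 2^a + 2^d = 2^b + 2^c :=
    eq_of_mod_eq_of_le m5 (by omega) (by omega) (by omega) (by omega)
  rcases two_pow_add_two_pow_inj hsum with ⟨hab, hdc⟩ | ⟨hac, hdb⟩
  · -- a = b forces i ≡ j mod m, impossible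
    exfalso
    subst hab
    have mij : i ≡ j [MOD m] := Nat.ModEq.add_right_cancel' (2^a) m1
    have hi : i % m = i := Nat.mod_eq_of_lt (by omega)
    have hj : j % m = j := Nat.mod_eq_of_lt (by omega)
    have : i = j := by have := mij; rw [Nat.ModEq, hi, hj] at this; exact this
    omega
  · subst hac
    rw [← hxa, ← hyc]
end

section
/- Let g be an even probability density on ℝ^d (g ≥ 0, even, with ∫ g = 1). Let W be a random vector in ℝ^d with density g and let b be uniformly distributed on [0, 2π], independent of W. Then for all x, x' ∈ ℝ^d, E[ 2 cos(⟨W, x⟩ + b) · cos(⟨W, x'⟩ + b) ] = ǧ(x − x'), where ǧ(u) = ∫_{ℝ^d} e^{i⟨u,ω⟩} g(ω) dω is the inverse Fourier transform of g (which is real-valued since g is even). -/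
open MeasureTheory Complex ProbabilityTheory

/-- The inverse Fourier transform `ǧ(x) = ∫ e^{i⟨x,ω⟩} g(ω) dω` of `g : ℝ^d → ℝ`. -/
noncomputable def invFourier (d : ℕ) (g : EuclideanSpace ℝ (Fin d) → ℝ)
    (x : EuclideanSpace ℝ (Fin d)) : ℂ :=
  ∫ ω, Complex.exp (Complex.I * ((inner ℝ x ω : ℝ) : ℂ)) * (g ω : ℂ)


lemma rff_sin_int_zero (d : ℕ) (g : EuclideanSpace ℝ (Fin d) → ℝ)
    (heven : ∀ ω, g (-ω) = g ω) (u : EuclideanSpace ℝ (Fin d)) :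
    ∫ ω, Real.sin (inner ℝ u ω : ℝ) * g ω = 0 := by
  have h := MeasureTheory.integral_neg_eq_self
    (fun ω => Real.sin (inner ℝ u ω : ℝ) * g ω) (volume : Measure (EuclideanSpace ℝ (Fin d)))
  simp only [inner_neg_right, heven, Real.sin_neg, neg_mul] at h
  rw [integral_neg] at h
  linarith

lemma rff_cos_mul_integrable (d : ℕ) (g : EuclideanSpace ℝ (Fin d) → ℝ)
    (hint : Integrable g) (u : EuclideanSpace ℝ (Fin d)) :
    Integrable (fun ω => Real.cos (inner ℝ u ω : ℝ) * g ω) := by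
  refine hint.bdd_mul (c := 1) ?_ (Filter.Eventually.of_forall fun ω => (Real.norm_eq_abs _).trans_le (Real.abs_cos_le_one _))
  exact (Real.continuous_cos.comp (continuous_const.inner continuous_id)).aestronglyMeasurable

lemma rff_sin_mul_integrable (d : ℕ) (g : EuclideanSpace ℝ (Fin d) → ℝ)
    (hint : Integrable g) (u : EuclideanSpace ℝ (Fin d)) :
    Integrable (fun ω => Real.sin (inner ℝ u ω : ℝ) * g ω) := by
  refine hint.bdd_mul (c := 1) ?_ (Filter.Eventually.of_forall fun ω => (Real.norm_eq_abs _).trans_le (Real.abs_sin_le_one _))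
  exact (Real.continuous_sin.comp (continuous_const.inner continuous_id)).aestronglyMeasurable

lemma rff_invFourier_real (d : ℕ) (g : EuclideanSpace ℝ (Fin d) → ℝ)
    (hint : Integrable g) (heven : ∀ ω, g (-ω) = g ω) (u : EuclideanSpace ℝ (Fin d)) :
    invFourier d g u = ((∫ ω, Real.cos (inner ℝ u ω : ℝ) * g ω : ℝ) : ℂ) := by
  have hcos := rff_cos_mul_integrable d g hint u
  have hsin := rff_sin_mul_integrable d g hint u
  unfold invFourier
  have key : ∀ ω : EuclideanSpace ℝ (Fin d),
      Complex.exp (Complex.I * ((inner ℝ u ω : ℝ) : ℂ)) * (g ω : ℂ) =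
      ((Real.cos (inner ℝ u ω : ℝ) * g ω : ℝ) : ℂ) +
      ((Real.sin (inner ℝ u ω : ℝ) * g ω : ℝ) : ℂ) * Complex.I := by
    intro ω
    rw [mul_comm Complex.I, Complex.exp_mul_I]
    push_cast
    ring
  simp only [key]
  have h2 : (Integrable (fun ω : EuclideanSpace ℝ (Fin d) =>
      ((Real.sin (inner ℝ u ω : ℝ) * g ω : ℝ) : ℂ) * Complex.I) volume) :=
    hsin.ofReal.mul_const Complex.I
  have h1 : (Integrable (fun ω : EuclideanSpace ℝ (Fin d) =>
      ((Real.cos (inner ℝ u ω : ℝ) * g ω : ℝ) : ℂ)) volume) := hcos.ofReal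
  have hcoe : ∀ (f : EuclideanSpace ℝ (Fin d) → ℝ), Integrable f →
      (∫ ω, ((f ω : ℝ) : ℂ)) = ((∫ ω, f ω : ℝ) : ℂ) := fun f hf => by
    simpa using Complex.ofRealCLM.integral_comp_comm hf
  rw [integral_add h1 h2, integral_mul_const, hcoe _ hcos, hcoe _ hsin,
    rff_sin_int_zero d g heven u]
  simp


/-- **Random Fourier features identity.** Let `g` be an even probability density on
`ℝ^d`, let `W` be a random vector with density `g`, and let `b` be uniform on
`[0, 2π]`, independent of `W`. Then for all `x, x'`,
`E[2 cos(⟨W,x⟩ + b) cos(⟨W,x'⟩ + b)] = ǧ(x − x')`. -/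
theorem random_fourier_features (d : ℕ) (g : EuclideanSpace ℝ (Fin d) → ℝ)
    (hint : Integrable g) (hpos : ∀ ω, 0 ≤ g ω) (heven : ∀ ω, g (-ω) = g ω)
    (hone : ∫ ω, g ω = 1)
    {Ω : Type*} [MeasureSpace Ω] [IsProbabilityMeasure (ℙ : Measure Ω)]
    (W : Ω → EuclideanSpace ℝ (Fin d)) (b : Ω → ℝ)
    (hW : Measurable W) (hb : Measurable b)
    (hWlaw : Measure.map W ℙ = volume.withDensity (fun ω => ENNReal.ofReal (g ω)))
    (hblaw : MeasureTheory.pdf.IsUniform b (Set.Icc 0 (2 * Real.pi)) ℙ volume)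
    (hindep : IndepFun W b ℙ) :
    ∀ x x' : EuclideanSpace ℝ (Fin d),
      ((∫ ω', 2 * Real.cos ((inner ℝ (W ω') x : ℝ) + b ω') *
          Real.cos ((inner ℝ (W ω') x' : ℝ) + b ω') ∂ℙ : ℝ) : ℂ) =
        invFourier d g (x - x') := by
  intro x x'
  -- expectations of functions of b
  have hmapb : Measure.map b ℙ =
      (volume (Set.Icc (0:ℝ) (2*Real.pi)))⁻¹ • volume.restrict (Set.Icc 0 (2*Real.pi)) := hblaw
  have hEb : ∀ f : ℝ → ℝ, Continuous f →
      ∫ ω', f (b ω') ∂ℙ = (volume (Set.Icc (0:ℝ) (2*Real.pi))).toReal⁻¹ •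
        ∫ t in Set.Icc (0:ℝ) (2*Real.pi), f t := by
    intro f hf
    rw [← integral_map hb.aemeasurable hf.aestronglyMeasurable, hmapb, integral_smul_measure,
      ENNReal.toReal_inv]
  have h2pi : (0:ℝ) ≤ 2*Real.pi := by positivity
  have hIcc : ∀ f : ℝ → ℝ, (∫ t in Set.Icc (0:ℝ) (2*Real.pi), f t) =
      ∫ t in (0:ℝ)..(2*Real.pi), f t := by
    intro f
    rw [integral_Icc_eq_integral_Ioc, ← intervalIntegral.integral_of_le h2pi]
  have hcos2b : (∫ ω', Real.cos (2 * b ω') ∂ℙ) = 0 := by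
    rw [hEb (fun t => Real.cos (2*t)) (by fun_prop), hIcc]
    rw [intervalIntegral.integral_comp_mul_left _ (two_ne_zero), mul_zero, integral_cos]
    rw [show (2:ℝ)*(2*Real.pi) = (4:ℕ)*Real.pi by push_cast; ring, Real.sin_nat_mul_pi]
    simp
  have hsin2b : (∫ ω', Real.sin (2 * b ω') ∂ℙ) = 0 := by
    rw [hEb (fun t => Real.sin (2*t)) (by fun_prop), hIcc]
    rw [intervalIntegral.integral_comp_mul_left _ (two_ne_zero), mul_zero, integral_sin]
    rw [show (2:ℝ)*(2*Real.pi) = (2:ℕ)*(2*Real.pi) by push_cast; ring,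
      Real.cos_nat_mul_two_pi]
    simp
  -- pushforward through W
  have hEW : ∀ h : EuclideanSpace ℝ (Fin d) → ℝ, Continuous h →
      ∫ ω', h (W ω') ∂ℙ = ∫ ω, h ω * g ω := by
    intro h hc
    rw [← integral_map hW.aemeasurable hc.aestronglyMeasurable, hWlaw]
    have hg' : AEMeasurable (fun ω => (g ω).toNNReal)
        (volume : Measure (EuclideanSpace ℝ (Fin d))) :=
      measurable_real_toNNReal.comp_aemeasurable hint.aemeasurable
    have : (volume.withDensity fun ω => ENNReal.ofReal (g ω)) =
        volume.withDensity (fun ω => ((g ω).toNNReal : ENNReal)) := rfl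
    rw [this, integral_withDensity_eq_integral_smul₀ hg' h]
    refine integral_congr_ae (Filter.Eventually.of_forall fun ω => ?_)
    simp [NNReal.smul_def, Real.coe_toNNReal _ (hpos ω), mul_comm]
  -- pointwise trig identity
  have key : ∀ ω' : Ω,
      2 * Real.cos ((inner ℝ (W ω') x : ℝ) + b ω') * Real.cos ((inner ℝ (W ω') x' : ℝ) + b ω') =
      Real.cos ((inner ℝ (W ω') (x - x') : ℝ)) +
      Real.cos (((inner ℝ (W ω') x : ℝ) + (inner ℝ (W ω') x' : ℝ)) + 2 * b ω') := by
    intro ω'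
    have h1 : (inner ℝ (W ω') (x - x') : ℝ) =
        ((inner ℝ (W ω') x : ℝ) + b ω') - ((inner ℝ (W ω') x' : ℝ) + b ω') := by
      rw [inner_sub_right]; ring
    have h2 : ((inner ℝ (W ω') x : ℝ) + (inner ℝ (W ω') x' : ℝ)) + 2 * b ω' =
        ((inner ℝ (W ω') x : ℝ) + b ω') + ((inner ℝ (W ω') x' : ℝ) + b ω') := by ring
    have trig : ∀ A B : ℝ, 2 * Real.cos A * Real.cos B = Real.cos (A - B) + Real.cos (A + B) := by
      intro A B; rw [Real.cos_sub, Real.cos_add]; ring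
    rw [trig, h1, h2]
  simp only [key]
  -- measurability helpers
  have mWx : ∀ v : EuclideanSpace ℝ (Fin d), Measurable fun ω' => (inner ℝ (W ω') v : ℝ) :=
    fun v => ((continuous_id.inner continuous_const).measurable).comp hW
  have m1 : Measurable fun ω' => Real.cos ((inner ℝ (W ω') (x - x') : ℝ)) :=
    Real.measurable_cos.comp (mWx (x - x'))
  have msum : Measurable fun ω' => ((inner ℝ (W ω') x : ℝ) + (inner ℝ (W ω') x' : ℝ)) + 2 * b ω' :=
    ((mWx x).add (mWx x')).add (hb.const_mul 2)
  have m2 : Measurable fun ω' =>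
      Real.cos (((inner ℝ (W ω') x : ℝ) + (inner ℝ (W ω') x' : ℝ)) + 2 * b ω') :=
    Real.measurable_cos.comp msum
  have hbd : ∀ {f : Ω → ℝ}, Measurable f → (∀ ω', |f ω'| ≤ 1) → Integrable f ℙ := by
    intro f hm hb1
    exact (integrable_const (1:ℝ)).mono' hm.aestronglyMeasurable
      (Filter.Eventually.of_forall fun ω' => by simpa using hb1 ω')
  have i1 : Integrable (fun ω' => Real.cos ((inner ℝ (W ω') (x - x') : ℝ))) ℙ :=
    hbd m1 fun ω' => Real.abs_cos_le_one _
  have i2 : Integrable (fun ω' =>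
      Real.cos (((inner ℝ (W ω') x : ℝ) + (inner ℝ (W ω') x' : ℝ)) + 2 * b ω')) ℙ :=
    hbd m2 fun ω' => Real.abs_cos_le_one _
  rw [integral_add i1 i2]
  -- second term vanishes
  have hsecond : (∫ ω', Real.cos (((inner ℝ (W ω') x : ℝ) + (inner ℝ (W ω') x' : ℝ)) + 2 * b ω') ∂ℙ)
      = 0 := by
    have expand : ∀ ω' : Ω,
        Real.cos (((inner ℝ (W ω') x : ℝ) + (inner ℝ (W ω') x' : ℝ)) + 2 * b ω') =
        Real.cos ((inner ℝ (W ω') x : ℝ) + (inner ℝ (W ω') x' : ℝ)) * Real.cos (2 * b ω') -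
        Real.sin ((inner ℝ (W ω') x : ℝ) + (inner ℝ (W ω') x' : ℝ)) * Real.sin (2 * b ω') :=
      fun ω' => Real.cos_add _ _
    simp only [expand]
    have mφc : Measurable fun ω' => Real.cos ((inner ℝ (W ω') x : ℝ) + (inner ℝ (W ω') x' : ℝ)) :=
      Real.measurable_cos.comp ((mWx x).add (mWx x'))
    have mφs : Measurable fun ω' => Real.sin ((inner ℝ (W ω') x : ℝ) + (inner ℝ (W ω') x' : ℝ)) :=
      Real.measurable_sin.comp ((mWx x).add (mWx x'))
    have mψc : Measurable fun ω' => Real.cos (2 * b ω') :=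
      Real.measurable_cos.comp (hb.const_mul 2)
    have mψs : Measurable fun ω' => Real.sin (2 * b ω') :=
      Real.measurable_sin.comp (hb.const_mul 2)
    have icc : Integrable (fun ω' =>
        Real.cos ((inner ℝ (W ω') x : ℝ) + (inner ℝ (W ω') x' : ℝ)) * Real.cos (2 * b ω')) ℙ :=
      hbd (mφc.mul mψc) fun ω' => by
        rw [abs_mul]
        exact mul_le_one₀ (Real.abs_cos_le_one _) (abs_nonneg _) (Real.abs_cos_le_one _)
    have iss : Integrable (fun ω' =>
        Real.sin ((inner ℝ (W ω') x : ℝ) + (inner ℝ (W ω') x' : ℝ)) * Real.sin (2 * b ω')) ℙ :=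
      hbd (mφs.mul mψs) fun ω' => by
        rw [abs_mul]
        exact mul_le_one₀ (Real.abs_sin_le_one _) (abs_nonneg _) (Real.abs_sin_le_one _)
    rw [integral_sub icc iss]
    have indc : IndepFun (fun ω' => Real.cos ((inner ℝ (W ω') x : ℝ) + (inner ℝ (W ω') x' : ℝ)))
        (fun ω' => Real.cos (2 * b ω')) ℙ := by
      exact hindep.comp
        (Real.measurable_cos.comp ((continuous_id.inner (continuous_const (y := x))).measurable.add
          (continuous_id.inner (continuous_const (y := x'))).measurable))
        (Real.measurable_cos.comp (measurable_id.const_mul 2))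
    have inds : IndepFun (fun ω' => Real.sin ((inner ℝ (W ω') x : ℝ) + (inner ℝ (W ω') x' : ℝ)))
        (fun ω' => Real.sin (2 * b ω')) ℙ := by
      exact hindep.comp
        (Real.measurable_sin.comp ((continuous_id.inner (continuous_const (y := x))).measurable.add
          (continuous_id.inner (continuous_const (y := x'))).measurable))
        (Real.measurable_sin.comp (measurable_id.const_mul 2))
    have e1 : (∫ ω', Real.cos ((inner ℝ (W ω') x : ℝ) + (inner ℝ (W ω') x' : ℝ)) *
        Real.cos (2 * b ω') ∂ℙ) =
        (∫ ω', Real.cos ((inner ℝ (W ω') x : ℝ) + (inner ℝ (W ω') x' : ℝ)) ∂ℙ) *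
        (∫ ω', Real.cos (2 * b ω') ∂ℙ) :=
      indc.integral_fun_mul_eq_mul_integral mφc.aestronglyMeasurable mψc.aestronglyMeasurable
    have e2 : (∫ ω', Real.sin ((inner ℝ (W ω') x : ℝ) + (inner ℝ (W ω') x' : ℝ)) *
        Real.sin (2 * b ω') ∂ℙ) =
        (∫ ω', Real.sin ((inner ℝ (W ω') x : ℝ) + (inner ℝ (W ω') x' : ℝ)) ∂ℙ) *
        (∫ ω', Real.sin (2 * b ω') ∂ℙ) :=
      inds.integral_fun_mul_eq_mul_integral mφs.aestronglyMeasurable mψs.aestronglyMeasurable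
    rw [e1, e2, hcos2b, hsin2b]
    ring
  rw [hsecond, add_zero]
  -- first term
  have hfirst : (∫ ω', Real.cos ((inner ℝ (W ω') (x - x') : ℝ)) ∂ℙ) =
      ∫ ω, Real.cos ((inner ℝ ω (x - x') : ℝ)) * g ω :=
    hEW _ (Real.continuous_cos.comp (continuous_id.inner continuous_const))
  rw [hfirst, rff_invFourier_real d g hint heven (x - x')]
  norm_cast
  refine integral_congr_ae (Filter.Eventually.of_forall fun ω => ?_)
  show Real.cos ((inner ℝ ω (x - x') : ℝ)) * g ω = Real.cos ((inner ℝ (x - x') ω : ℝ)) * g ω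
  rw [real_inner_comm]
end
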